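/- Let M ≥ 1 and n ≥ 1 be integers, let P be a nonempty finite subset of (ZMod M)^n, and let W be a point of the affine span of P over the ring ZMod M (i.e., W = Σ_j r_j·p_j for some finitely many p_j ∈ P and coefficients r_j ∈ ZMod M with Σ_j r_j = 1). Then for every natural number L with L ≥ M·|P| and (L : ZMod M) = 1, there exists a function x : Fin L → (ZMod M)^n with x(i) ∈ P for every i and Σ_{i} x(i) = W. -/

import Mathlib

/-- A point of the affine span over `ZMod M` of a nonempty finite set
`P ⊆ (ZMod M)^n` is realized as the sum of `L` elements of `P`, for any
`L ≥ M·|P|` with `L ≡ 1 (mod M)`. -/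
theorem affineSpan_point_eq_sum_of_elements
    (M n : ℕ) (hM : 1 ≤ M) (hn : 1 ≤ n)
    (P : Finset (Fin n → ZMod M)) (hP : P.Nonempty)
    (W : Fin n → ZMod M)
    (hW : W ∈ affineSpan (ZMod M) (P : Set (Fin n → ZMod M)))
    (L : ℕ) (hL : M * P.card ≤ L) (hL1 : (L : ZMod M) = 1) :
    ∃ x : Fin L → (Fin n → ZMod M),
      (∀ i, x i ∈ P) ∧ ∑ i, x i = W := by
  classical
  have : NeZero M := ⟨by omega⟩
  -- express W as an affine combination indexed by the subtype of P
  rw [← Subtype.range_coe (s := (P : Set (Fin n → ZMod M)))] at hW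
  obtain ⟨s, w, hw, hWeq⟩ := eq_affineCombination_of_mem_affineSpan hW
  rw [Finset.affineCombination_eq_linear_combination s _ w hw] at hWeq
  -- collapse the weights onto the elements of P
  set c : (Fin n → ZMod M) → ZMod M :=
    fun q => ∑ i ∈ s.filter (fun i => i.1 = q), w i with hc
  have hmaps : ∀ i ∈ s, (i : Fin n → ZMod M) ∈ P := fun i _ => i.2
  have hcsum : ∑ q ∈ P, c q = 1 := by
    simp only [hc]
    rw [Finset.sum_fiberwise_of_maps_to hmaps, hw]
  have hcW : ∑ q ∈ P, c q • q = W := by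
    rw [hWeq, ← Finset.sum_fiberwise_of_maps_to hmaps (fun i => w i • (i : Fin n → ZMod M))]
    refine Finset.sum_congr rfl fun q _ => ?_
    simp only [hc]
    rw [Finset.sum_smul]
    refine Finset.sum_congr rfl fun i hi => ?_
    rw [(Finset.mem_filter.mp hi).2]
  -- total natural weight
  set S : ℕ := ∑ q ∈ P, (c q).val with hS
  have hSle : S ≤ L := by
    calc S ≤ ∑ _q ∈ P, M := Finset.sum_le_sum fun q _ => (ZMod.val_lt (c q)).le
    _ = P.card * M := by rw [Finset.sum_const, smul_eq_mul]
    _ = M * P.card := Nat.mul_comm _ _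
    _ ≤ L := hL
  have hScast : (S : ZMod M) = 1 := by
    rw [hS, Nat.cast_sum]
    rw [← hcsum]
    exact Finset.sum_congr rfl fun q _ => ZMod.natCast_rightInverse (c q)
  obtain ⟨p0, hp0⟩ := hP
  -- the multiset of elements to sum
  set m : Multiset (Fin n → ZMod M) :=
    (P.val.bind fun q => Multiset.replicate (c q).val q) +
      Multiset.replicate (L - S) p0 with hm
  have hbindcard :
      Multiset.card (P.val.bind fun q => Multiset.replicate (c q).val q) = S := by
    rw [Multiset.card_bind]
    simp only [Function.comp_def, Multiset.card_replicate]
    rfl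
  have hcard : Multiset.card m = L := by
    rw [hm, Multiset.card_add, hbindcard, Multiset.card_replicate]
    omega
  have hmem : ∀ v ∈ m, v ∈ P := by
    intro v hv
    rw [hm, Multiset.mem_add] at hv
    rcases hv with hv | hv
    · obtain ⟨q, hq, hv⟩ := Multiset.mem_bind.mp hv
      rw [(Multiset.eq_of_mem_replicate hv)]
      exact hq
    · rw [Multiset.eq_of_mem_replicate hv]; exact hp0
  have hsum : m.sum = W := by
    rw [hm, Multiset.sum_add, Multiset.sum_bind]
    have h1 : (P.val.map fun q => (Multiset.replicate (c q).val q).sum).sum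
        = ∑ q ∈ P, c q • q := by
      rw [show (∑ q ∈ P, (c q) • q) = (P.val.map fun q => (c q) • q).sum from rfl]
      congr 1
      refine Multiset.map_congr rfl fun q _ => ?_
      rw [Multiset.sum_replicate, ← Nat.cast_smul_eq_nsmul (ZMod M),
        ZMod.natCast_rightInverse (c q)]
    have h2 : (Multiset.replicate (L - S) p0).sum = 0 := by
      rw [Multiset.sum_replicate, ← Nat.cast_smul_eq_nsmul (ZMod M),
        Nat.cast_sub hSle, hL1, hScast, sub_self, zero_smul]
    rw [h1, h2, add_zero, hcW]
  -- convert the multiset into a function `Fin L → V`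
  set l : List (Fin n → ZMod M) := m.toList with hl
  have hlen : l.length = L := by rw [hl, Multiset.length_toList, hcard]
  refine ⟨fun i => l.get (Fin.cast hlen.symm i), fun i => ?_, ?_⟩
  · exact hmem _ (Multiset.mem_toList.mp
      (l.get_mem (Fin.cast hlen.symm i)))
  · have : ∑ i : Fin L, l.get (Fin.cast hlen.symm i) = ∑ j : Fin l.length, l.get j :=
      Fintype.sum_equiv (finCongr hlen.symm) _ _ (fun i => rfl)
    rw [this]
    have := Fin.sum_univ_getElem l
    rw [show (∑ j : Fin l.length, l.get j) = ∑ j : Fin l.length, l[j.1] from rfl, this,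
      hl, Multiset.sum_toList, hsum]
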